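/- (Probability that the empirical confusion matrix is nearly singular) Let C be the confusion matrix with smallest singular value δ := σ_min(C) > 0, and let Ĉ be the empirical confusion matrix from n iid samples from P. Then P(σ_min(Ĉ) < δ/2) ≤ 2k² exp(−n δ² / (2k³)); in particular, the probability that Ĉ is not invertible is at most 2k² exp(−n δ² / (2k³)). -/

import Mathlib

open MeasureTheory ProbabilityTheory Filter Matrix

noncomputable section

/-- Population confusion matrix: `C i j = P (f⁻¹(i) × {j})`. -/
def confusion {X : Type*} [MeasurableSpace X] {k : ℕ}
    (P : Measure (X × Fin k)) (f : X → Fin k) : Matrix (Fin k) (Fin k) ℝ :=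
  fun i j => (P ((f ⁻¹' {i}) ×ˢ ({j} : Set (Fin k)))).toReal

/-- Empirical confusion matrix from `n` samples. -/
def empConfusion {X Ω : Type*} {k : ℕ}
    (f : X → Fin k) (Z : ℕ → Ω → X × Fin k) (n : ℕ) (ω : Ω) : Matrix (Fin k) (Fin k) ℝ :=
  fun i j => ((Finset.range n).filter (fun l => f (Z l ω).1 = i ∧ (Z l ω).2 = j)).card / n

/-- The smallest singular value of a square real matrix: the square root of the smallest
eigenvalue of `Mᴴ M`. -/
def sigmaMin {k : ℕ} (M : Matrix (Fin k) (Fin k) ℝ) : ℝ :=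
  Real.sqrt (⨅ i, (Matrix.isHermitian_conjTranspose_mul_self M).eigenvalues i)

section Aux

open Real
open scoped ENNReal

lemma hoeff_point (p : ℝ) (hp0 : 0 ≤ p) (hp1 : p ≤ 1) (s : ℝ) :
    1 - p + p * Real.exp s ≤ Real.exp (s * p + s ^ 2 / 8) := by
  set d : ℝ → ℝ := fun u => 1 - p + p * Real.exp u with hd_def
  have hd : ∀ u, 0 < d u := by
    intro u
    rcases lt_or_ge p 1 with h | h
    · have : 0 ≤ p * Real.exp u := mul_nonneg hp0 (Real.exp_pos u).le
      simp only [hd_def]; linarith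
    · have hp : p = 1 := le_antisymm hp1 h
      simp only [hd_def, hp]; have := Real.exp_pos u; linarith
  have hd' : ∀ u, HasDerivAt d (p * Real.exp u) u := by
    intro u
    exact ((Real.hasDerivAt_exp u).const_mul p).const_add (1 - p)
  set F : ℝ → ℝ := fun u => u * p + u ^ 2 / 8 - Real.log (d u) with hF_def
  set F' : ℝ → ℝ := fun u => p + u / 4 - p * Real.exp u / d u with hF'_def
  set F'' : ℝ → ℝ := fun u =>
      1 / 4 - (p * Real.exp u * d u - p * Real.exp u * (p * Real.exp u)) / (d u) ^ 2 with hF''_def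
  have hF : ∀ u, HasDerivAt F (F' u) u := by
    intro u
    have h1 : HasDerivAt (fun v : ℝ => v * p + v ^ 2 / 8) (p + u / 4) u := by
      have := (hasDerivAt_mul_const (x := u) p).add ((hasDerivAt_pow 2 u).div_const 8)
      exact this.congr_deriv (by rw [show (2:ℕ) - 1 = 1 from rfl]; push_cast; ring)
    have h2 : HasDerivAt (fun v => Real.log (d v)) (p * Real.exp u / d u) u :=
      (hd' u).log (hd u).ne'
    exact h1.sub h2
  have hF' : ∀ u, HasDerivAt F' (F'' u) u := by
    intro u
    have h2 : HasDerivAt (fun v => p * Real.exp v / d v)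
        ((p * Real.exp u * d u - p * Real.exp u * (p * Real.exp u)) / (d u) ^ 2) u :=
      ((Real.hasDerivAt_exp u).const_mul p).div (hd' u) (hd u).ne'
    have h1 : HasDerivAt (fun v : ℝ => p + v / 4) (1 / 4) u := by
      simpa using ((hasDerivAt_id u).div_const 4).const_add p
    exact h1.sub h2
  have hF''0 : ∀ u, 0 ≤ F'' u := by
    intro u
    have ha0 : 0 ≤ p * Real.exp u := mul_nonneg hp0 (Real.exp_pos u).le
    have had : p * Real.exp u ≤ d u := by simp only [hd_def]; linarith
    have hdq : (0:ℝ) < (d u) ^ 2 := pow_pos (hd u) 2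
    have key : (p * Real.exp u * d u - p * Real.exp u * (p * Real.exp u)) / (d u) ^ 2 ≤ 1 / 4 := by
      rw [div_le_iff₀ hdq]
      have key0 : ∀ a D : ℝ, 0 ≤ a → a ≤ D → a * D - a * a ≤ 1 / 4 * D ^ 2 := by
        intro a D _ _; nlinarith [sq_nonneg (2 * a - D)]
      exact key0 _ _ ha0 had
    simp only [hF''_def]; linarith
  have hmono : Monotone F' :=
    monotone_of_deriv_nonneg (fun u => (hF' u).differentiableAt)
      (fun u => by rw [(hF' u).deriv]; exact hF''0 u)
  have hF'0 : F' 0 = 0 := by simp [hF'_def, hd_def]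
  have hF0 : F 0 = 0 := by simp [hF_def, hd_def]
  have hFdiff : Differentiable ℝ F := fun u => (hF u).differentiableAt
  have hFnonneg : ∀ u, 0 ≤ F u := by
    intro u
    rcases le_total 0 u with h | h
    · have hm : MonotoneOn F (Set.Ici 0) := by
        refine monotoneOn_of_deriv_nonneg (convex_Ici 0) hFdiff.continuous.continuousOn
          hFdiff.differentiableOn ?_
        intro x hx
        rw [(hF x).deriv]
        rw [interior_Ici] at hx
        have := hmono (le_of_lt hx)
        rw [hF'0] at this; exact this
      have := hm Set.self_mem_Ici (Set.mem_Ici.mpr h) h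
      rwa [hF0] at this
    · have hm : AntitoneOn F (Set.Iic 0) := by
        refine antitoneOn_of_deriv_nonpos (convex_Iic 0) hFdiff.continuous.continuousOn
          hFdiff.differentiableOn ?_
        intro x hx
        rw [(hF x).deriv]
        rw [interior_Iic] at hx
        have := hmono (le_of_lt hx)
        rw [hF'0] at this; exact this
      have := hm (Set.mem_Iic.mpr h) Set.self_mem_Iic h
      rwa [hF0] at this
    
  have hlog : Real.log (d s) ≤ s * p + s ^ 2 / 8 := by
    have := hFnonneg s; simp only [hF_def] at this; linarith
  have := (Real.log_le_iff_le_exp (hd s)).mp hlog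
  simpa [hd_def] using this

variable {k : ℕ}

variable {k : ℕ}

lemma dot_MM (M : Matrix (Fin k) (Fin k) ℝ) (x : Fin k → ℝ) :
    x ⬝ᵥ (Mᴴ * M) *ᵥ x = (M *ᵥ x) ⬝ᵥ (M *ᵥ x) := by
  rw [conjTranspose_eq_transpose_of_trivial, ← mulVec_mulVec, dotProduct_mulVec,
    vecMul_transpose]

lemma rayleigh_lower (hk : 0 < k) (M : Matrix (Fin k) (Fin k) ℝ) (x : Fin k → ℝ) :
    (⨅ i, (Matrix.isHermitian_conjTranspose_mul_self M).eigenvalues i) * (x ⬝ᵥ x)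
      ≤ (M *ᵥ x) ⬝ᵥ (M *ᵥ x) := by
  haveI : NeZero k := ⟨hk.ne'⟩
  set hA := Matrix.isHermitian_conjTranspose_mul_self M with hA_def
  set c := ⨅ i, hA.eigenvalues i with hc_def
  have hbdd : BddBelow (Set.range hA.eigenvalues) := (Set.finite_range _).bddBelow
  have hcle : ∀ i, c ≤ hA.eigenvalues i := fun i => ciInf_le hbdd i
  set U : Matrix (Fin k) (Fin k) ℝ := (hA.eigenvectorUnitary : Matrix (Fin k) (Fin k) ℝ)
    with hU_def
  have hUU : U * star U = 1 := (Matrix.mem_unitaryGroup_iff).mp hA.eigenvectorUnitary.2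
  have hdiag : (diagonal (RCLike.ofReal ∘ hA.eigenvalues) : Matrix (Fin k) (Fin k) ℝ)
      = diagonal (fun i => hA.eigenvalues i - c) + c • 1 := by
    rw [smul_one_eq_diagonal, diagonal_add]
    congr 1
    funext i
    simp [RCLike.ofReal_real_eq_id]
  have hsub : Mᴴ * M - c • (1 : Matrix (Fin k) (Fin k) ℝ)
      = U * diagonal (fun i => hA.eigenvalues i - c) * star U := by
    have hcU : U * (c • (1 : Matrix (Fin k) (Fin k) ℝ)) * star U
        = c • (1 : Matrix (Fin k) (Fin k) ℝ) := by
      rw [Matrix.mul_smul, mul_one, Matrix.smul_mul, hUU]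
    have hspec := hA.spectral_theorem
    rw [hdiag] at hspec
    rw [Unitary.conjStarAlgAut_apply, mul_add, add_mul, hcU] at hspec
    exact sub_eq_of_eq_add hspec
  have hpsd : (Mᴴ * M - c • (1 : Matrix (Fin k) (Fin k) ℝ)).PosSemidef := by
    rw [hsub]
    exact (posSemidef_diagonal_iff.mpr fun i => sub_nonneg.mpr (hcle i)).mul_mul_conjTranspose_same U
  have h0 := hpsd.dotProduct_mulVec_nonneg x
  have hstar : (star x : Fin k → ℝ) = x := by simp
  rw [hstar, sub_mulVec, dotProduct_sub, smul_mulVec, one_mulVec, dotProduct_smul,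
    dot_MM] at h0
  simp only [smul_eq_mul] at h0
  linarith

lemma eigenvalues_TM_nonneg (M : Matrix (Fin k) (Fin k) ℝ) (i : Fin k) :
    0 ≤ (Matrix.isHermitian_conjTranspose_mul_self M).eigenvalues i :=
  (Matrix.posSemidef_conjTranspose_mul_self M).eigenvalues_nonneg i

lemma lamin_nonneg (hk : 0 < k) (M : Matrix (Fin k) (Fin k) ℝ) :
    0 ≤ ⨅ i, (Matrix.isHermitian_conjTranspose_mul_self M).eigenvalues i := by
  haveI : NeZero k := ⟨hk.ne'⟩
  exact le_ciInf (eigenvalues_TM_nonneg M)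

lemma sigmaMin_sq (hk : 0 < k) (M : Matrix (Fin k) (Fin k) ℝ) :
    sigmaMin M ^ 2 = ⨅ i, (Matrix.isHermitian_conjTranspose_mul_self M).eigenvalues i :=
  Real.sq_sqrt (lamin_nonneg hk M)

lemma sigmaMin_nonneg (M : Matrix (Fin k) (Fin k) ℝ) : 0 ≤ sigmaMin M := Real.sqrt_nonneg _

lemma dot_self_euclid (hk : 0 < k) (v : EuclideanSpace ℝ (Fin k)) :
    (⇑v : Fin k → ℝ) ⬝ᵥ ⇑v = ‖v‖ ^ 2 := by
  rw [EuclideanSpace.norm_eq, Real.sq_sqrt (by positivity)]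
  simp [dotProduct, Real.norm_eq_abs, sq_abs, sq]

lemma exists_unit_eigvec (hk : 0 < k) (M : Matrix (Fin k) (Fin k) ℝ) :
    ∃ x : Fin k → ℝ, x ⬝ᵥ x = 1 ∧
      (M *ᵥ x) ⬝ᵥ (M *ᵥ x) = ⨅ i, (Matrix.isHermitian_conjTranspose_mul_self M).eigenvalues i := by
  haveI : NeZero k := ⟨hk.ne'⟩
  set hA := Matrix.isHermitian_conjTranspose_mul_self M with hA_def
  obtain ⟨i₀, hi₀⟩ := Finite.exists_min hA.eigenvalues
  have hbdd : BddBelow (Set.range hA.eigenvalues) := (Set.finite_range _).bddBelow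
  have hmin : (⨅ i, hA.eigenvalues i) = hA.eigenvalues i₀ :=
    le_antisymm (ciInf_le hbdd i₀) (le_ciInf hi₀)
  have hn : ‖hA.eigenvectorBasis i₀‖ = 1 := hA.eigenvectorBasis.orthonormal.1 i₀
  have hdot : (⇑(hA.eigenvectorBasis i₀) : Fin k → ℝ) ⬝ᵥ ⇑(hA.eigenvectorBasis i₀) = 1 := by
    rw [dot_self_euclid hk, hn, one_pow]
  refine ⟨⇑(hA.eigenvectorBasis i₀), hdot, ?_⟩
  rw [← dot_MM, hA.mulVec_eigenvectorBasis, dotProduct_smul, smul_eq_mul, hdot, mul_one, hmin]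

lemma nrm_eq (v : Fin k → ℝ) :
    Real.sqrt (v ⬝ᵥ v) = ‖(WithLp.equiv 2 (Fin k → ℝ)).symm v‖ := by
  rw [EuclideanSpace.norm_eq]
  congr 1
  simp [dotProduct, Real.norm_eq_abs, sq_abs, sq]

lemma nrm_triangle (u v : Fin k → ℝ) :
    Real.sqrt ((u + v) ⬝ᵥ (u + v)) ≤ Real.sqrt (u ⬝ᵥ u) + Real.sqrt (v ⬝ᵥ v) := by
  rw [nrm_eq, nrm_eq, nrm_eq]
  have : (WithLp.equiv 2 (Fin k → ℝ)).symm (u + v)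
      = (WithLp.equiv 2 (Fin k → ℝ)).symm u + (WithLp.equiv 2 (Fin k → ℝ)).symm v := rfl
  rw [this]
  exact norm_add_le _ _

lemma sigmaMin_le_nrm (hk : 0 < k) (M : Matrix (Fin k) (Fin k) ℝ) (x : Fin k → ℝ)
    (hx : x ⬝ᵥ x = 1) : sigmaMin M ≤ Real.sqrt ((M *ᵥ x) ⬝ᵥ (M *ᵥ x)) := by
  have h := rayleigh_lower hk M x
  rw [hx, mul_one] at h
  exact Real.sqrt_le_sqrt h

lemma nrm_mulVec_le (M : Matrix (Fin k) (Fin k) ℝ) (x : Fin k → ℝ) (t : ℝ) (ht : 0 ≤ t)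
    (hM : ∀ i j, |M i j| ≤ t) (hx : x ⬝ᵥ x = 1) :
    Real.sqrt ((M *ᵥ x) ⬝ᵥ (M *ᵥ x)) ≤ k * t := by
  have hxsq : ∑ j, x j ^ 2 = 1 := by
    rw [← hx]; simp [dotProduct, sq]
  have h1 : (M *ᵥ x) ⬝ᵥ (M *ᵥ x) ≤ (k * t) ^ 2 := by
    have hrow : ∀ i : Fin k, (M *ᵥ x) i * (M *ᵥ x) i ≤ k * t ^ 2 := by
      intro i
      have hcs := Finset.sum_mul_sq_le_sq_mul_sq Finset.univ (fun j => M i j) x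
      have hMi : ∑ j, M i j ^ 2 ≤ (k : ℝ) * t ^ 2 := by
        calc ∑ j, M i j ^ 2 ≤ ∑ _j : Fin k, t ^ 2 := by
              refine Finset.sum_le_sum fun j _ => ?_
              rw [← sq_abs]
              exact pow_le_pow_left₀ (abs_nonneg _) (hM i j) 2
          _ = (k : ℝ) * t ^ 2 := by simp [mul_comm]
      have : (M *ᵥ x) i * (M *ᵥ x) i = (∑ j, M i j * x j) ^ 2 := by
        simp [mulVec, dotProduct, sq]
      rw [this]
      calc (∑ j, M i j * x j) ^ 2 ≤ (∑ j, M i j ^ 2) * ∑ j, x j ^ 2 := hcs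
        _ ≤ (k : ℝ) * t ^ 2 := by rw [hxsq, mul_one]; exact hMi
    calc (M *ᵥ x) ⬝ᵥ (M *ᵥ x) = ∑ i, (M *ᵥ x) i * (M *ᵥ x) i := rfl
      _ ≤ ∑ _i : Fin k, (k : ℝ) * t ^ 2 := Finset.sum_le_sum fun i _ => hrow i
      _ = (k * t) ^ 2 := by simp; ring
  calc Real.sqrt ((M *ᵥ x) ⬝ᵥ (M *ᵥ x)) ≤ Real.sqrt ((k * t) ^ 2) := Real.sqrt_le_sqrt h1
    _ = k * t := Real.sqrt_sq (by positivity)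

lemma sigmaMin_perturb (hk : 0 < k) (M N : Matrix (Fin k) (Fin k) ℝ) (t : ℝ) (ht : 0 ≤ t)
    (hE : ∀ i j, |N i j - M i j| ≤ t) : sigmaMin M - k * t ≤ sigmaMin N := by
  obtain ⟨x, hx1, hx2⟩ := exists_unit_eigvec hk N
  have hsN : sigmaMin N = Real.sqrt ((N *ᵥ x) ⬝ᵥ (N *ᵥ x)) := by
    rw [sigmaMin, ← hx2]
  have hMx : sigmaMin M ≤ Real.sqrt ((M *ᵥ x) ⬝ᵥ (M *ᵥ x)) := sigmaMin_le_nrm hk M x hx1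
  have hdecomp : M *ᵥ x = N *ᵥ x + (M - N) *ᵥ x := by
    rw [← add_mulVec, add_sub_cancel]
  have htri : Real.sqrt ((M *ᵥ x) ⬝ᵥ (M *ᵥ x))
      ≤ Real.sqrt ((N *ᵥ x) ⬝ᵥ (N *ᵥ x)) + Real.sqrt (((M - N) *ᵥ x) ⬝ᵥ ((M - N) *ᵥ x)) := by
    rw [hdecomp]; exact nrm_triangle _ _
  have hEx : Real.sqrt (((M - N) *ᵥ x) ⬝ᵥ ((M - N) *ᵥ x)) ≤ k * t := by
    refine nrm_mulVec_le _ x t ht (fun i j => ?_) hx1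
    rw [Matrix.sub_apply, abs_sub_comm]
    exact hE i j
  linarith

lemma sigmaMin_eq_zero_of_det (hk : 0 < k) (N : Matrix (Fin k) (Fin k) ℝ) (h : N.det = 0) :
    sigmaMin N = 0 := by
  obtain ⟨v, hv0, hvz⟩ := (Matrix.exists_mulVec_eq_zero_iff).mpr h
  have h1 := rayleigh_lower hk N v
  rw [hvz, zero_dotProduct] at h1
  have hvv : 0 < v ⬝ᵥ v := by
    have h0 : 0 ≤ v ⬝ᵥ v := Finset.sum_nonneg fun i _ => mul_self_nonneg _
    rcases h0.lt_or_eq with h | h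
    · exact h
    · exact absurd (dotProduct_self_eq_zero.mp h.symm) hv0
  have hle : (⨅ i, (Matrix.isHermitian_conjTranspose_mul_self N).eigenvalues i) ≤ 0 := by
    nlinarith
  rw [sigmaMin, Real.sqrt_eq_zero']
  exact hle

lemma tail_upper {α : Type*} [MeasurableSpace α]
    (P : Measure α) [IsProbabilityMeasure P]
    {Ω : Type*} [MeasurableSpace Ω] (μ : Measure Ω) [IsProbabilityMeasure μ]
    (Z : ℕ → Ω → α) (hZmeas : ∀ l, Measurable (Z l)) (hZlaw : ∀ l, μ.map (Z l) = P)
    (hindep : iIndepFun Z μ)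
    (S : Set α) (hS : MeasurableSet S) (n : ℕ) (t : ℝ) (ht : 0 ≤ t) :
    (μ {ω | (n : ℝ) * ((P S).toReal + t)
        ≤ ∑ l ∈ Finset.range n, S.indicator (fun _ => (1:ℝ)) (Z l ω)}).toReal
      ≤ Real.exp (-2 * n * t ^ 2) := by
  set g : α → ℝ := S.indicator (fun _ => (1:ℝ)) with hg_def
  have hg : Measurable g := measurable_const.indicator hS
  have hg01 : ∀ z, 0 ≤ g z ∧ g z ≤ 1 := by
    intro z
    by_cases hz : z ∈ S <;> simp [hg_def, Set.indicator_apply, hz]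
  set W : ℕ → Ω → ℝ := fun l => g ∘ Z l with hW_def
  have hWmeas : ∀ l, Measurable (W l) := fun l => hg.comp (hZmeas l)
  have hWindep : iIndepFun W μ :=
    hindep.comp (fun _ => g) (fun _ => hg)
  set p : ℝ := (P S).toReal with hp_def
  have hp0 : 0 ≤ p := ENNReal.toReal_nonneg
  have hp1 : p ≤ 1 := by
    rw [hp_def]
    have := prob_le_one (μ := P) (s := S)
    calc (P S).toReal ≤ (1 : ℝ≥0∞).toReal := ENNReal.toReal_mono ENNReal.one_ne_top this
      _ = 1 := by simp
  set s : ℝ := 4 * t with hs_def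
  have hs : 0 ≤ s := by positivity
  have hint : ∀ l, Integrable (fun ω => Real.exp (s * W l ω)) μ := by
    intro l
    refine Integrable.mono' (integrable_const (Real.exp |s|))
      (((hWmeas l).const_mul s).exp.aestronglyMeasurable) (ae_of_all _ fun ω => ?_)
    rw [Real.norm_eq_abs, abs_of_pos (Real.exp_pos _), Real.exp_le_exp]
    calc s * W l ω ≤ |s| * W l ω :=
          mul_le_mul_of_nonneg_right (le_abs_self s) (hg01 _).1
      _ ≤ |s| * 1 := mul_le_mul_of_nonneg_left (hg01 _).2 (abs_nonneg s)
      _ = |s| := mul_one _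
  have hmgf : ∀ l, mgf (W l) μ s = 1 - p + p * Real.exp s := by
    intro l
    have h1 : mgf (W l) μ s = ∫ ω, Real.exp (s * g (Z l ω)) ∂μ := rfl
    rw [h1]
    have h2 : ∫ ω, Real.exp (s * g (Z l ω)) ∂μ = ∫ z, Real.exp (s * g z) ∂(μ.map (Z l)) :=
      (integral_map (hZmeas l).aemeasurable
        ((hg.const_mul s).exp.aestronglyMeasurable)).symm
    rw [h2, hZlaw l]
    have h3 : (fun z => Real.exp (s * g z))
        = fun z => S.indicator (fun _ => Real.exp s - 1) z + 1 := by
      funext z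
      by_cases hz : z ∈ S <;>
        simp [hg_def, Set.indicator_apply, hz]
    rw [h3, integral_add ((integrable_const _).indicator hS) (integrable_const 1),
      integral_indicator_const _ hS, integral_const]
    simp only [smul_eq_mul, Measure.real, measure_univ, ENNReal.toReal_one, one_smul]
    ring
  have hintsum : Integrable (fun ω => Real.exp (s * (∑ l ∈ Finset.range n, W l) ω)) μ :=
    hWindep.integrable_exp_mul_sum hWmeas (fun l _ => hint l)
  have hsum_mgf : mgf (∑ l ∈ Finset.range n, W l) μ s = (1 - p + p * Real.exp s) ^ n := by
    rw [hWindep.mgf_sum hWmeas]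
    rw [Finset.prod_congr rfl (fun l _ => hmgf l), Finset.prod_const, Finset.card_range]
  have hchern := measure_ge_le_exp_mul_mgf (X := ∑ l ∈ Finset.range n, W l) (μ := μ)
    ((n : ℝ) * (p + t)) hs hintsum
  have hset : {ω | (n : ℝ) * (p + t) ≤ (∑ l ∈ Finset.range n, W l) ω}
      = {ω | (n : ℝ) * ((P S).toReal + t)
        ≤ ∑ l ∈ Finset.range n, S.indicator (fun _ => (1:ℝ)) (Z l ω)} := by
    ext ω
    simp [Finset.sum_apply, hW_def, hg_def, hp_def]
  rw [hset] at hchern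
  refine hchern.trans ?_
  rw [hsum_mgf]
  have hbase : 0 ≤ 1 - p + p * Real.exp s := by
    have := mul_nonneg hp0 (Real.exp_pos s).le
    linarith
  have hpow : (1 - p + p * Real.exp s) ^ n ≤ Real.exp ((n : ℝ) * (s * p + s ^ 2 / 8)) := by
    calc (1 - p + p * Real.exp s) ^ n ≤ (Real.exp (s * p + s ^ 2 / 8)) ^ n :=
          pow_le_pow_left₀ hbase (hoeff_point p hp0 hp1 s) n
      _ = Real.exp ((n : ℝ) * (s * p + s ^ 2 / 8)) := by
          rw [← Real.exp_nat_mul]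
  calc Real.exp (-s * ((n : ℝ) * (p + t))) * (1 - p + p * Real.exp s) ^ n
      ≤ Real.exp (-s * ((n : ℝ) * (p + t))) * Real.exp ((n : ℝ) * (s * p + s ^ 2 / 8)) := by
        exact mul_le_mul_of_nonneg_left hpow (Real.exp_pos _).le
    _ = Real.exp (-2 * n * t ^ 2) := by
        rw [← Real.exp_add]
        congr 1
        rw [hs_def]
        ring

end Aux

/-- Probability that the empirical confusion matrix is nearly singular.
`P(σ_min(Ĉ) < δ/2) ≤ 2k² exp(-n δ² / (2k³))`, and in particular the probability that `Ĉ`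
is not invertible is at most the same quantity. -/
theorem empirical_confusion_nearly_singular
    {X : Type*} [MeasurableSpace X] {k : ℕ} (hk : 1 ≤ k)
    (P : Measure (X × Fin k)) [IsProbabilityMeasure P]
    (f : X → Fin k) (hf : Measurable f)
    {Ω : Type*} [MeasurableSpace Ω] (μ : Measure Ω) [IsProbabilityMeasure μ]
    (Z : ℕ → Ω → X × Fin k)
    (hZmeas : ∀ l, Measurable (Z l)) (hZlaw : ∀ l, μ.map (Z l) = P)
    (hindep : iIndepFun Z μ)
    (hσ : 0 < sigmaMin (confusion P f)) (n : ℕ) :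
    (μ {ω | sigmaMin (empConfusion f Z n ω) < sigmaMin (confusion P f) / 2}).toReal
        ≤ 2 * k ^ 2 * Real.exp (-(n : ℝ) * (sigmaMin (confusion P f)) ^ 2 / (2 * k ^ 3)) ∧
      (μ {ω | ¬ IsUnit (empConfusion f Z n ω).det}).toReal
        ≤ 2 * k ^ 2 * Real.exp (-(n : ℝ) * (sigmaMin (confusion P f)) ^ 2 / (2 * k ^ 3)) := by
  classical
  have hk0 : 0 < k := hk
  set δ := sigmaMin (confusion P f) with hδ_def
  have hsub : {ω | ¬ IsUnit (empConfusion f Z n ω).det} ⊆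
      {ω | sigmaMin (empConfusion f Z n ω) < δ / 2} := by
    intro ω hω
    simp only [Set.mem_setOf_eq] at hω ⊢
    have hdet : (empConfusion f Z n ω).det = 0 := by
      by_contra h
      exact hω (isUnit_iff_ne_zero.mpr h)
    rw [sigmaMin_eq_zero_of_det hk0 _ hdet]
    linarith
  have hkR : (0:ℝ) < k := by exact_mod_cast hk0
  have hk1R : (1:ℝ) ≤ k := by exact_mod_cast hk
  have key : (μ {ω | sigmaMin (empConfusion f Z n ω) < δ / 2}).toReal
      ≤ 2 * k ^ 2 * Real.exp (-(n : ℝ) * δ ^ 2 / (2 * k ^ 3)) := by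
    rcases Nat.eq_zero_or_pos n with hn | hn
    · have hle1 : (μ {ω | sigmaMin (empConfusion f Z n ω) < δ / 2}).toReal ≤ 1 := by
        calc (μ {ω | sigmaMin (empConfusion f Z n ω) < δ / 2}).toReal
            ≤ (μ Set.univ).toReal :=
              ENNReal.toReal_mono (measure_ne_top μ _) (measure_mono (Set.subset_univ _))
          _ = 1 := by simp
      subst hn
      simp only [Nat.cast_zero, neg_zero, zero_mul, zero_div, Real.exp_zero, mul_one]
      nlinarith [hle1, hk1R, sq_nonneg ((k:ℝ) - 1)]
    · set t := δ / (2 * k) with ht_def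
      have ht : 0 < t := by positivity
      set Sij := fun (i j : Fin k) => (f ⁻¹' {i}) ×ˢ ({j} : Set (Fin k)) with hSij_def
      have hSmeas : ∀ i j, MeasurableSet (Sij i j) := fun i j =>
        (hf (measurableSet_singleton i)).prod (measurableSet_singleton j)
      set A := fun (q : Fin k × Fin k) =>
        {ω | (n : ℝ) * ((P (Sij q.1 q.2)).toReal + t)
          ≤ ∑ l ∈ Finset.range n, (Sij q.1 q.2).indicator (fun _ => (1:ℝ)) (Z l ω)} with hA_def
      set B := fun (q : Fin k × Fin k) =>
        {ω | (n : ℝ) * ((P (Sij q.1 q.2)ᶜ).toReal + t)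
          ≤ ∑ l ∈ Finset.range n, ((Sij q.1 q.2)ᶜ).indicator (fun _ => (1:ℝ)) (Z l ω)} with hB_def
      have hAbound : ∀ q : Fin k × Fin k, (μ (A q)).toReal ≤ Real.exp (-2 * n * t ^ 2) :=
        fun q => tail_upper P μ Z hZmeas hZlaw hindep _ (hSmeas q.1 q.2) n t ht.le
      have hBbound : ∀ q : Fin k × Fin k, (μ (B q)).toReal ≤ Real.exp (-2 * n * t ^ 2) :=
        fun q => tail_upper P μ Z hZmeas hZlaw hindep _ (hSmeas q.1 q.2).compl n t ht.le
      have hnR : (0:ℝ) < n := by exact_mod_cast hn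
      have hcompl : ∀ i j, (P (Sij i j)ᶜ).toReal = 1 - (P (Sij i j)).toReal := by
        intro i j
        rw [measure_compl (hSmeas i j) (measure_ne_top _ _), measure_univ,
          ENNReal.toReal_sub_of_le prob_le_one ENNReal.one_ne_top]
        simp
      have hemp : ∀ (ω : Ω) (i j : Fin k), empConfusion f Z n ω i j
          = (∑ l ∈ Finset.range n, (Sij i j).indicator (fun _ => (1:ℝ)) (Z l ω)) / n := by
        intro ω i j
        unfold empConfusion
        congr 1
        rw [Finset.card_filter]
        push_cast
        refine Finset.sum_congr rfl fun l _ => ?_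
        by_cases h : f (Z l ω).1 = i ∧ (Z l ω).2 = j
        · have hm : Z l ω ∈ Sij i j := by
            simp only [hSij_def, Set.mem_prod, Set.mem_preimage, Set.mem_singleton_iff]
            exact h
          simp [Set.indicator_of_mem hm, h]
        · have hm : Z l ω ∉ Sij i j := by
            simp only [hSij_def, Set.mem_prod, Set.mem_preimage, Set.mem_singleton_iff]
            exact h
          simp [Set.indicator_of_notMem hm, h]
      have hpointsum : ∀ (ω : Ω) (i j : Fin k),
          (∑ l ∈ Finset.range n, (Sij i j).indicator (fun _ => (1:ℝ)) (Z l ω))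
          + (∑ l ∈ Finset.range n, ((Sij i j)ᶜ).indicator (fun _ => (1:ℝ)) (Z l ω)) = n := by
        intro ω i j
        rw [← Finset.sum_add_distrib]
        have h1 : ∀ l ∈ Finset.range n,
            (Sij i j).indicator (fun _ => (1:ℝ)) (Z l ω)
            + ((Sij i j)ᶜ).indicator (fun _ => (1:ℝ)) (Z l ω) = 1 := by
          intro l _
          by_cases h : Z l ω ∈ Sij i j <;> simp [Set.indicator_apply, h]
        rw [Finset.sum_congr rfl h1, Finset.sum_const, Finset.card_range, nsmul_eq_mul, mul_one]
      have hincl : {ω | sigmaMin (empConfusion f Z n ω) < δ / 2}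
          ⊆ ⋃ q : Fin k × Fin k, (A q ∪ B q) := by
        intro ω hω
        by_contra hnot
        simp only [Set.mem_iUnion, Set.mem_union, not_exists, not_or] at hnot
        have hE : ∀ i j, |empConfusion f Z n ω i j - confusion P f i j| ≤ t := by
          intro i j
          obtain ⟨hA', hB'⟩ := hnot (i, j)
          rw [hA_def] at hA'
          rw [hB_def] at hB'
          simp only [Set.mem_setOf_eq, not_le] at hA' hB'
          rw [hcompl i j] at hB'
          have hlow : (n : ℝ) * ((P (Sij i j)).toReal - t)
              < ∑ l ∈ Finset.range n, (Sij i j).indicator (fun _ => (1:ℝ)) (Z l ω) := by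
            have hps := hpointsum ω i j
            nlinarith [hB']
          have hconf : confusion P f i j = (P (Sij i j)).toReal := rfl
          rw [hemp ω i j, hconf, abs_le]
          constructor
          · have h2 : (P (Sij i j)).toReal - t
                ≤ (∑ l ∈ Finset.range n, (Sij i j).indicator (fun _ => (1:ℝ)) (Z l ω)) / n :=
              (le_div_iff₀ hnR).mpr (by nlinarith [hlow])
            linarith
          · have h2 : (∑ l ∈ Finset.range n, (Sij i j).indicator (fun _ => (1:ℝ)) (Z l ω)) / n
                ≤ (P (Sij i j)).toReal + t :=
              (div_le_iff₀ hnR).mpr (by nlinarith [hA'])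
            linarith
        have hper := sigmaMin_perturb hk0 (confusion P f) (empConfusion f Z n ω) t ht.le hE
        rw [← hδ_def] at hper
        have hkt : (k : ℝ) * t = δ / 2 := by
          rw [ht_def]
          field_simp
        rw [hkt] at hper
        rw [Set.mem_setOf_eq] at hω
        linarith
      set e := Real.exp (-2 * n * t ^ 2) with he_def
      have he0 : 0 ≤ e := (Real.exp_pos _).le
      have hABq : ∀ q : Fin k × Fin k, μ (A q ∪ B q) ≤ ENNReal.ofReal (2 * e) := by
        intro q
        calc μ (A q ∪ B q) ≤ μ (A q) + μ (B q) := measure_union_le _ _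
          _ ≤ ENNReal.ofReal e + ENNReal.ofReal e :=
              add_le_add
                ((ENNReal.le_ofReal_iff_toReal_le (measure_ne_top μ _) he0).mpr (hAbound q))
                ((ENNReal.le_ofReal_iff_toReal_le (measure_ne_top μ _) he0).mpr (hBbound q))
          _ = ENNReal.ofReal (2 * e) := by rw [← ENNReal.ofReal_add he0 he0]; ring_nf
      have hmeas_le : μ {ω | sigmaMin (empConfusion f Z n ω) < δ / 2}
          ≤ ENNReal.ofReal ((k:ℝ)^2 * (2 * e)) := by
        calc μ {ω | sigmaMin (empConfusion f Z n ω) < δ / 2}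
            ≤ μ (⋃ q : Fin k × Fin k, (A q ∪ B q)) := measure_mono hincl
          _ ≤ ∑ q : Fin k × Fin k, μ (A q ∪ B q) := measure_iUnion_fintype_le _ _
          _ ≤ ∑ _q : Fin k × Fin k, ENNReal.ofReal (2 * e) :=
              Finset.sum_le_sum fun q _ => hABq q
          _ = ((k^2 : ℕ) : ENNReal) * ENNReal.ofReal (2 * e) := by
              rw [Finset.sum_const, Finset.card_univ, Fintype.card_prod, Fintype.card_fin,
                nsmul_eq_mul]
              congr 1
              norm_cast
              ring
          _ = ENNReal.ofReal ((k:ℝ)^2 * (2 * e)) := by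
              rw [← ENNReal.ofReal_natCast (k^2), ← ENNReal.ofReal_mul (by positivity)]
              push_cast
              ring_nf
      have hfinal : (μ {ω | sigmaMin (empConfusion f Z n ω) < δ / 2}).toReal
          ≤ (k:ℝ)^2 * (2 * e) :=
        ENNReal.toReal_le_of_le_ofReal (by positivity) hmeas_le
      refine hfinal.trans ?_
      have hexp : e ≤ Real.exp (-(n : ℝ) * δ ^ 2 / (2 * k ^ 3)) := by
        rw [he_def, Real.exp_le_exp]
        have heq : -2 * (n:ℝ) * t ^ 2 = -((n:ℝ) * δ^2 / (2 * (k:ℝ)^2)) := by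
          rw [ht_def]
          field_simp
        rw [heq]
        have hle : (n:ℝ) * δ^2 / (2 * (k:ℝ)^3) ≤ (n:ℝ) * δ^2 / (2 * (k:ℝ)^2) := by
          apply div_le_div_of_nonneg_left (by positivity) (by positivity)
          nlinarith [hk1R, hkR]
        have h2 : -(n:ℝ) * δ^2 / (2 * (k:ℝ)^3) = -((n:ℝ) * δ^2 / (2 * (k:ℝ)^3)) := by ring
        rw [h2]
        linarith [hle]
      calc (k:ℝ)^2 * (2 * e)
          ≤ (k:ℝ)^2 * (2 * Real.exp (-(n : ℝ) * δ ^ 2 / (2 * k ^ 3))) := by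
            have := mul_le_mul_of_nonneg_left hexp (by norm_num : (0:ℝ) ≤ 2)
            exact mul_le_mul_of_nonneg_left this (by positivity)
        _ = 2 * k^2 * Real.exp (-(n : ℝ) * δ ^ 2 / (2 * k ^ 3)) := by ring
  exact ⟨key, le_trans (ENNReal.toReal_mono (measure_ne_top μ _) (measure_mono hsub)) key⟩

end
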